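/- Let n ≥ 1, let D and Θ be measurable spaces, let f be a trade-off function, and let M be a Markov kernel from Dⁿ (functions Fin n → D) to Θ satisfying f-DP with respect to the replace-one relation. Define f⁽ⁿ⁾ : [0,1] → [0,1] by f⁽ⁿ⁾(x) = 1 − (1−f)∘ⁿ(x), where (1−f)∘ⁿ is the n-fold composition of the map x ↦ 1 − f(x). Then for every probability measure P on D and every jointly measurable R : Dⁿ × Θ → [0,1], ∫_{Dⁿ} ∫_{Dⁿ} ∫_Θ R(T, θ) d(M(S))(θ) dPⁿ(T) dPⁿ(S) ≤ 1 − f⁽ⁿ⁾( ∫_{Dⁿ} ∫_Θ R(S, θ) d(M(S))(θ) dPⁿ(S) ). -/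

import Mathlib

open MeasureTheory ProbabilityTheory

/-- A trade-off function: convex, continuous, non-increasing on `[0,1]`,
taking values in `[0,1]` with `f α ≤ 1 - α`. -/
def IsTradeoff (f : ℝ → ℝ) : Prop :=
  ConvexOn ℝ (Set.Icc (0:ℝ) 1) f ∧ ContinuousOn f (Set.Icc (0:ℝ) 1) ∧
  AntitoneOn f (Set.Icc (0:ℝ) 1) ∧
  ∀ x ∈ Set.Icc (0:ℝ) 1, f x ∈ Set.Icc (0:ℝ) 1 ∧ f x ≤ 1 - x

/-- The pair `(P, Q)` satisfies the `f`-DP inequality: every randomized test `φ` has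
`∫ φ dQ ≤ 1 - f (∫ φ dP)`. -/
def FDPIneq {Θ : Type*} [MeasurableSpace Θ] (f : ℝ → ℝ) (P Q : Measure Θ) : Prop :=
  ∀ φ : Θ → ℝ, Measurable φ → (∀ θ, φ θ ∈ Set.Icc (0:ℝ) 1) →
    ∫ θ, φ θ ∂Q ≤ 1 - f (∫ θ, φ θ ∂P)



lemma aux_integrable {Ω : Type*} [MeasurableSpace Ω] (μ : Measure Ω) [IsProbabilityMeasure μ]
    (φ : Ω → ℝ) (hm : AEStronglyMeasurable φ μ) (h01 : ∀ θ, φ θ ∈ Set.Icc (0:ℝ) 1) :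
    Integrable φ μ :=
  (integrable_const (1:ℝ)).mono' hm (Filter.Eventually.of_forall fun θ => by
    rw [Real.norm_eq_abs, abs_of_nonneg (h01 θ).1]; exact (h01 θ).2)

lemma aux_int_mem {Ω : Type*} [MeasurableSpace Ω] (μ : Measure Ω) [IsProbabilityMeasure μ]
    (φ : Ω → ℝ) (hm : AEStronglyMeasurable φ μ) (h01 : ∀ θ, φ θ ∈ Set.Icc (0:ℝ) 1) :
    (∫ θ, φ θ ∂μ) ∈ Set.Icc (0:ℝ) 1 := by
  constructor
  · exact integral_nonneg fun θ => (h01 θ).1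
  · calc ∫ θ, φ θ ∂μ ≤ ∫ _, (1:ℝ) ∂μ :=
          integral_mono (aux_integrable μ φ hm h01) (integrable_const 1) fun θ => (h01 θ).2
      _ = 1 := by simp


lemma aux_iter (f : ℝ → ℝ)
    (hconv : ConvexOn ℝ (Set.Icc (0:ℝ) 1) f) (hcont : ContinuousOn f (Set.Icc (0:ℝ) 1))
    (hanti : AntitoneOn f (Set.Icc (0:ℝ) 1))
    (hmem : ∀ x ∈ Set.Icc (0:ℝ) 1, f x ∈ Set.Icc (0:ℝ) 1 ∧ f x ≤ 1 - x) (k : ℕ) :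
    (∀ x ∈ Set.Icc (0:ℝ) 1, (fun y => 1 - f y)^[k] x ∈ Set.Icc (0:ℝ) 1) ∧
    MonotoneOn ((fun y => 1 - f y)^[k]) (Set.Icc (0:ℝ) 1) ∧
    ConcaveOn ℝ (Set.Icc (0:ℝ) 1) ((fun y => 1 - f y)^[k]) ∧
    ContinuousOn ((fun y => 1 - f y)^[k]) (Set.Icc (0:ℝ) 1) ∧
    (∀ x ∈ Set.Icc (0:ℝ) 1, x ≤ (fun y => 1 - f y)^[k] x) := by
  set g : ℝ → ℝ := fun y => 1 - f y with hg
  have hgmem : ∀ x ∈ Set.Icc (0:ℝ) 1, g x ∈ Set.Icc (0:ℝ) 1 := by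
    intro x hx
    obtain ⟨⟨h0, h1⟩, _⟩ := hmem x hx
    exact ⟨by simp [hg]; linarith, by simp [hg]; linarith⟩
  have hgmono : MonotoneOn g (Set.Icc (0:ℝ) 1) := by
    intro x hx y hy hxy
    have := hanti hx hy hxy
    simp only [hg]; linarith
  have hgconc : ConcaveOn ℝ (Set.Icc (0:ℝ) 1) g := by
    have : ConcaveOn ℝ (Set.Icc (0:ℝ) 1) ((fun _ => (1:ℝ)) - f) :=
      (concaveOn_const 1 (convex_Icc 0 1)).sub hconv
    convert this using 1
    rfl
  have hgcont : ContinuousOn g (Set.Icc (0:ℝ) 1) := continuousOn_const.sub hcont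
  have hgle : ∀ x ∈ Set.Icc (0:ℝ) 1, x ≤ g x := by
    intro x hx
    have := (hmem x hx).2
    simp only [hg]; linarith
  induction k with
  | zero =>
    simp only [Function.iterate_zero, id_eq]
    exact ⟨fun x hx => hx, fun x _ y _ h => h, concaveOn_id (convex_Icc 0 1),
      continuousOn_id, fun x _ => le_refl x⟩
  | succ k ih =>
    obtain ⟨imem, imono, iconc, icont, ile⟩ := ih
    have hcomp : ∀ x, g^[k+1] x = g (g^[k] x) := fun x => Function.iterate_succ_apply' g k x
    refine ⟨?_, ?_, ?_, ?_, ?_⟩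
    · intro x hx; rw [hcomp]; exact hgmem _ (imem x hx)
    · intro x hx y hy hxy
      rw [hcomp, hcomp]
      exact hgmono (imem x hx) (imem y hy) (imono hx hy hxy)
    · refine ⟨convex_Icc 0 1, ?_⟩
      intro x hx y hy a b ha hb hab
      have hmemc : a • x + b • y ∈ Set.Icc (0:ℝ) 1 := (convex_Icc 0 1) hx hy ha hb hab
      have hmemc' : a • g^[k] x + b • g^[k] y ∈ Set.Icc (0:ℝ) 1 :=
        (convex_Icc 0 1) (imem x hx) (imem y hy) ha hb hab
      rw [hcomp, hcomp, hcomp]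
      calc a • g (g^[k] x) + b • g (g^[k] y) ≤ g (a • g^[k] x + b • g^[k] y) :=
            hgconc.2 (imem x hx) (imem y hy) ha hb hab
        _ ≤ g (g^[k] (a • x + b • y)) :=
            hgmono hmemc' (imem _ hmemc) (iconc.2 hx hy ha hb hab)
    · rw [Function.iterate_succ']
      exact hgcont.comp icont (fun x hx => imem x hx)
    · intro x hx
      rw [hcomp]
      exact (ile x hx).trans (hgle _ (imem x hx))

/-- Group privacy: any two databases differ in at most `n` coordinates. -/
lemma aux_group {D Θ : Type*} [MeasurableSpace D] [MeasurableSpace Θ]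
    {n : ℕ} (f : ℝ → ℝ)
    (M : Kernel (Fin n → D) Θ) [IsMarkovKernel M]
    (hDP : ∀ S S' : Fin n → D, (∃ i : Fin n, ∀ j : Fin n, j ≠ i → S j = S' j) →
      ∀ φ : Θ → ℝ, Measurable φ → (∀ θ, φ θ ∈ Set.Icc (0:ℝ) 1) →
        ∫ θ, φ θ ∂(M S) ≤ 1 - f (∫ θ, φ θ ∂(M S')))
    (hmonoK : ∀ k ≤ n, MonotoneOn ((fun y => 1 - f y)^[k]) (Set.Icc (0:ℝ) 1))
    (hmem : ∀ x ∈ Set.Icc (0:ℝ) 1, (fun y => 1 - f y) x ∈ Set.Icc (0:ℝ) 1)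
    (S T : Fin n → D) (φ : Θ → ℝ) (hφ : Measurable φ) (h01 : ∀ θ, φ θ ∈ Set.Icc (0:ℝ) 1) :
    ∫ θ, φ θ ∂(M S) ≤ (fun y => 1 - f y)^[n] (∫ θ, φ θ ∂(M T)) := by
  set g : ℝ → ℝ := fun y => 1 - f y with hg
  set hyb : ℕ → (Fin n → D) := fun k i => if (i : ℕ) < k then T i else S i with hhyb
  have hint : ∀ A : Fin n → D, (∫ θ, φ θ ∂(M A)) ∈ Set.Icc (0:ℝ) 1 := fun A =>
    aux_int_mem (M A) φ hφ.aestronglyMeasurable h01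
  have key : ∀ k, k ≤ n → ∫ θ, φ θ ∂(M S) ≤ g^[k] (∫ θ, φ θ ∂(M (hyb k))) := by
    intro k
    induction k with
    | zero =>
      intro _
      have : hyb 0 = S := by funext i; simp [hhyb]
      simp [this]
    | succ k ih =>
      intro hk1
      have hk : k < n := lt_of_lt_of_le (Nat.lt_succ_self k) hk1
      have hstep : ∫ θ, φ θ ∂(M (hyb k)) ≤ g (∫ θ, φ θ ∂(M (hyb (k+1)))) := by
        have hnb : ∃ i : Fin n, ∀ j : Fin n, j ≠ i → hyb k j = hyb (k+1) j := by
          refine ⟨⟨k, hk⟩, fun j hj => ?_⟩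
          have hjk : (j : ℕ) ≠ k := fun h => hj (Fin.ext h)
          simp only [hhyb]
          rcases lt_or_ge (j : ℕ) k with h | h
          · rw [if_pos h, if_pos (h.trans (Nat.lt_succ_self k))]
          · have h' : ¬ (j : ℕ) < k := not_lt.mpr h
            have h'' : ¬ (j : ℕ) < k + 1 := by omega
            rw [if_neg h', if_neg h'']
        exact hDP (hyb k) (hyb (k+1)) hnb φ hφ h01
      calc ∫ θ, φ θ ∂(M S) ≤ g^[k] (∫ θ, φ θ ∂(M (hyb k))) := ih (le_of_lt hk1)
        _ ≤ g^[k] (g (∫ θ, φ θ ∂(M (hyb (k+1))))) :=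
            (hmonoK k (le_of_lt hk1)) (hint _) (hmem _ (hint _)) hstep
        _ = g^[k+1] (∫ θ, φ θ ∂(M (hyb (k+1)))) :=
            (Function.iterate_succ_apply g k _).symm
    
  have hT : hyb n = T := by funext i; simp [hhyb, i.isLt]
  have := key n le_rfl
  rwa [hT] at this

/-- Lemma D.2, second inequality: generalization for non-linear queries via
group privacy, with `f⁽ⁿ⁾ = 1 - (1 - f)∘ⁿ`. -/
theorem stmt_15 {D Θ : Type*} [MeasurableSpace D] [MeasurableSpace Θ]
    (n : ℕ) (hn : 1 ≤ n)
    (f : ℝ → ℝ) (hf : IsTradeoff f)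
    (M : Kernel (Fin n → D) Θ) [IsMarkovKernel M]
    (hDP : ∀ S S' : Fin n → D, (∃ i : Fin n, ∀ j : Fin n, j ≠ i → S j = S' j) →
      FDPIneq f (M S') (M S))
    (fn : ℝ → ℝ) (hfn : ∀ x, fn x = 1 - (fun y => 1 - f y)^[n] x)
    (P : Measure D) [IsProbabilityMeasure P]
    (R : (Fin n → D) → Θ → ℝ) (hR : Measurable (Function.uncurry R))
    (hR01 : ∀ S θ, R S θ ∈ Set.Icc (0:ℝ) 1) :
    ∫ S, ∫ T, ∫ θ, R T θ ∂(M S) ∂(Measure.pi fun _ : Fin n => P)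
        ∂(Measure.pi fun _ : Fin n => P) ≤
      1 - fn (∫ S, ∫ θ, R S θ ∂(M S) ∂(Measure.pi fun _ : Fin n => P)) := by
  obtain ⟨hconv, hcont, hanti, hfmem⟩ := hf
  set μn : Measure (Fin n → D) := Measure.pi fun _ : Fin n => P with hμn
  set g : ℝ → ℝ := fun y => 1 - f y with hg
  obtain ⟨hmemn, hmonon, hconcn, hcontn, -⟩ := aux_iter f hconv hcont hanti hfmem n
  have hg1mem : ∀ x ∈ Set.Icc (0:ℝ) 1, g x ∈ Set.Icc (0:ℝ) 1 := by
    intro x hx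
    obtain ⟨⟨h0, h1⟩, _⟩ := hfmem x hx
    exact ⟨by simp [hg]; linarith, by simp [hg]; linarith⟩
  -- the function u
  set u : (Fin n → D) → ℝ := fun T => ∫ θ, R T θ ∂(M T) with hu
  have husm : StronglyMeasurable u := hR.stronglyMeasurable.integral_kernel_prod_right
  have humem : ∀ T, u T ∈ Set.Icc (0:ℝ) 1 := fun T =>
    aux_int_mem (M T) (R T) hR.of_uncurry_left.aestronglyMeasurable (hR01 T)
  have hu_int : Integrable u μn :=
    aux_integrable μn u husm.aestronglyMeasurable humem
  -- integrability of gⁿ ∘ u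
  have hgnmeas : Measurable (fun T => g^[n] (u T)) := by
    have hv : Measurable (fun T => (⟨u T, humem T⟩ : Set.Icc (0:ℝ) 1)) :=
      Measurable.subtype_mk husm.measurable
    have hc : Continuous ((Set.Icc (0:ℝ) 1).restrict (g^[n])) := hcontn.restrict
    exact hc.measurable.comp hv
  have hgnu_int : Integrable (fun T => g^[n] (u T)) μn :=
    aux_integrable μn _ hgnmeas.aestronglyMeasurable (fun T => hmemn _ (humem T))
  -- group privacy pointwise
  have step1 : ∀ S T : Fin n → D, ∫ θ, R T θ ∂(M S) ≤ g^[n] (u T) := by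
    intro S T
    exact aux_group f M (fun S S' h φ hφ h01 => hDP S S' h φ hφ h01)
      (fun k _ => (aux_iter f hconv hcont hanti hfmem k).2.1) hg1mem S T
      (R T) hR.of_uncurry_left (hR01 T)
  -- inner bound
  have step2 : ∀ S : Fin n → D,
      ∫ T, (∫ θ, R T θ ∂(M S)) ∂μn ≤ ∫ T, g^[n] (u T) ∂μn := by
    intro S
    refine integral_mono_of_nonneg ?_ hgnu_int ?_
    · exact Filter.Eventually.of_forall fun T => integral_nonneg fun θ => (hR01 T θ).1
    · exact Filter.Eventually.of_forall fun T => step1 S T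
  -- outer bound
  have step3 : ∫ S, ∫ T, ∫ θ, R T θ ∂(M S) ∂μn ∂μn ≤ ∫ T, g^[n] (u T) ∂μn := by
    calc ∫ S, ∫ T, ∫ θ, R T θ ∂(M S) ∂μn ∂μn
        ≤ ∫ _, (∫ T, g^[n] (u T) ∂μn) ∂μn := by
          refine integral_mono_of_nonneg ?_ (integrable_const _) ?_
          · exact Filter.Eventually.of_forall fun S =>
              integral_nonneg fun T => integral_nonneg fun θ => (hR01 T θ).1
          · exact Filter.Eventually.of_forall step2
      _ = ∫ T, g^[n] (u T) ∂μn := by simp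
  -- Jensen
  have jensen : ∫ T, g^[n] (u T) ∂μn ≤ g^[n] (∫ T, u T ∂μn) :=
    hconcn.le_map_integral hcontn isClosed_Icc
      (Filter.Eventually.of_forall humem) hu_int hgnu_int
  have : ∫ S, ∫ θ, R S θ ∂(M S) ∂μn = ∫ T, u T ∂μn := rfl
  rw [this, hfn]
  have := step3.trans jensen
  linarith
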